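/- For every integer n ≥ 2 and every m ≥ 2^(2^(4n)), the number of graphs on the labeled vertex set [m] satisfying H ⟶ (Kₙ)^Δ is at least (3/4)·2^(binom(m,2)). Equivalently, the random graph G(m,1/2) satisfies G(m,1/2) ⟶ (Kₙ)^Δ with probability at least 3/4. -/

import Mathlib

open Finset

/-- `H ⟶ (Kₙ)^Δ`: every 2-coloring of the triangles of `H` yields a copy of `Kₙ`
(a clique on `n` vertices) all of whose triangles receive the same color. -/
def ArrowKnTri {V : Type*} (H : SimpleGraph V) (n : ℕ) : Prop :=
  ∀ χ : Finset V → Bool, ∃ (K : Finset V) (c : Bool), H.IsNClique n K ∧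
    ∀ t ⊆ K, H.IsNClique 3 t → χ t = c

section AuxRamseyCounting

open scoped Classical


/-- prehomogeneous sequence extraction (Ramsey) -/
lemma ramsey_seq (c : ℕ → ℕ → Bool) :
    ∀ (k : ℕ) (A : Finset ℕ), 2 ^ k ≤ A.card →
    ∃ (v : ℕ → ℕ) (b : ℕ → Bool), (∀ i, i < k → v i ∈ A) ∧
      (∀ i j, i < j → j < k → v i < v j) ∧
      (∀ i j, i < j → j < k → c (v i) (v j) = b i) := by
  intro k
  induction k with
  | zero =>
    intro A _
    exact ⟨fun _ => 0, fun _ => true, by omega, by omega, by omega⟩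
  | succ k ih =>
    intro A hA
    classical
    have hne : A.Nonempty := by
      apply card_pos.1
      have := Nat.one_le_two_pow (n := k)
      omega
    set a := A.min' hne with ha
    have hsplit :
        ((A.erase a).filter (fun x => c a x = true)).card +
        ((A.erase a).filter (fun x => ¬ (c a x = true))).card = A.card - 1 := by
      rw [card_filter_add_card_filter_not, card_erase_of_mem (A.min'_mem hne)]
    have h2 : 2 ^ k ≤ ((A.erase a).filter (fun x => c a x = true)).card ∨
        2 ^ k ≤ ((A.erase a).filter (fun x => ¬ (c a x = true))).card := by
      rw [pow_succ] at hA; omega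
    obtain ⟨C, b0, hCcard, hCsub, hCcol⟩ :
        ∃ (C : Finset ℕ) (b0 : Bool), 2 ^ k ≤ C.card ∧ C ⊆ A.erase a ∧
          ∀ x ∈ C, c a x = b0 := by
      rcases h2 with h | h
      · exact ⟨_, true, h, filter_subset _ _, fun x hx => (mem_filter.1 hx).2⟩
      · refine ⟨_, false, h, filter_subset _ _, fun x hx => ?_⟩
        have := (mem_filter.1 hx).2
        simp at this
        exact this
    obtain ⟨v, b, hv1, hv2, hv3⟩ := ih C hCcard
    refine ⟨fun i => if i = 0 then a else v (i - 1),
      fun i => if i = 0 then b0 else b (i - 1), ?_, ?_, ?_⟩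
    · intro i hi
      by_cases h : i = 0
      · simp [h, ha, A.min'_mem hne]
      · simp only [h, if_neg]
        have : v (i - 1) ∈ C := hv1 _ (by omega)
        exact (A.erase_subset a) (hCsub this)
    · intro i j hij hj
      have hj0 : j ≠ 0 := by omega
      have hvj : v (j - 1) ∈ C := hv1 _ (by omega)
      have hmem : v (j - 1) ∈ A.erase a := hCsub hvj
      have hne' : v (j - 1) ≠ a := (mem_erase.1 hmem).1
      have hle : a ≤ v (j - 1) := A.min'_le _ ((mem_erase.1 hmem).2)
      by_cases h : i = 0
      · simp only [h, if_pos, if_neg hj0]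
        omega
      · simp only [if_neg h, if_neg hj0]
        exact hv2 _ _ (by omega) (by omega)
    · intro i j hij hj
      have hj0 : j ≠ 0 := by omega
      have hvj : v (j - 1) ∈ C := hv1 _ (by omega)
      by_cases h : i = 0
      · simp only [h, if_pos, if_neg hj0]
        simpa using hCcol _ hvj
      · simp only [if_neg h, if_neg hj0]
        exact hv3 _ _ (by omega) (by omega)

/-- any 3-element finset of naturals can be sorted -/
lemma sorted_three (T : Finset ℕ) (h : T.card = 3) :
    ∃ a b c, a < b ∧ b < c ∧ T = {a, b, c} := by
  obtain ⟨x, y, z, hxy, hxz, hyz, rfl⟩ := Finset.card_eq_three.1 h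
  have hperm : ∀ a b c : ℕ, ({x, y, z} : Finset ℕ) = {a, b, c} ∨ True := fun _ _ _ => Or.inr trivial
  rcases lt_trichotomy x y with h1 | h1 | h1 <;> [skip; omega; skip] <;>
    rcases lt_trichotomy y z with h2 | h2 | h2 <;> [skip; omega; skip; skip; omega; skip] <;>
    rcases lt_trichotomy x z with h3 | h3 | h3 <;> try omega
  · exact ⟨x, y, z, h1, h2, rfl⟩
  · exact ⟨x, z, y, h3, by omega, by ext w; simp; tauto⟩
  · exact ⟨z, x, y, by omega, h1, by ext w; simp; tauto⟩
  · exact ⟨y, x, z, h1, h3, by ext w; simp; tauto⟩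
  · exact ⟨y, z, x, by omega, h3, by ext w; simp; tauto⟩
  · exact ⟨z, y, x, h2, by omega, by ext w; simp; tauto⟩

section
variable {m : ℕ}

/-- In a graph with no independent `t`-set inside `A`, some vertex of `A`
has many neighbours in `A`. -/
lemma exists_high_deg (G : SimpleGraph (Fin m)) (t : ℕ) (A : Finset (Fin m))
    (hind : ∀ I ⊆ A, (∀ x ∈ I, ∀ y ∈ I, x ≠ y → ¬ G.Adj x y) → I.card < t)
    (hA : A.Nonempty) :
    ∃ v ∈ A, ∃ D : Finset (Fin m), D ⊆ A.erase v ∧ (∀ x ∈ D, G.Adj v x) ∧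
      A.card ≤ t * (D.card + 1) := by
  classical
  set 𝒮 := A.powerset.filter (fun I => ∀ x ∈ I, ∀ y ∈ I, x ≠ y → ¬ G.Adj x y) with h𝒮
  have hSne : 𝒮.Nonempty := ⟨∅, by simp [h𝒮]⟩
  obtain ⟨I, hI, hImax⟩ := Finset.exists_max_image 𝒮 Finset.card hSne
  rw [h𝒮, mem_filter, mem_powerset] at hI
  obtain ⟨hIA, hIind⟩ := hI
  have hIne : I.Nonempty := by
    rcases hA with ⟨x, hx⟩
    rcases I.eq_empty_or_nonempty with rfl | h
    · exfalso
      have hmem : {x} ∈ 𝒮 := by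
        simp only [h𝒮, mem_filter, mem_powerset]
        refine ⟨by simpa using hx, ?_⟩
        intro a ha b hb hab
        simp only [mem_singleton] at ha hb
        exact absurd (ha.trans hb.symm) hab
      simpa using hImax _ hmem
    · exact h
  -- every vertex of A \ I has a neighbour in I
  have hcover : ∀ x ∈ A, x ∉ I → ∃ w ∈ I, G.Adj w x := by
    intro x hxA hxI
    by_contra hno
    push_neg at hno
    have hmem : insert x I ∈ 𝒮 := by
      simp only [h𝒮, mem_filter, mem_powerset]
      constructor
      · exact insert_subset hxA hIA
      · intro a ha b hb hab hadj
        rcases mem_insert.1 ha with h1 | h1 <;> rcases mem_insert.1 hb with h2 | h2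
        · exact hab (h1.trans h2.symm)
        · exact hno b h2 (h1 ▸ hadj).symm
        · exact hno a h1 (h2 ▸ hadj)
        · exact hIind a h1 b h2 hab hadj
    have := hImax _ hmem
    rw [card_insert_of_notMem hxI] at this
    omega
  -- A is covered by I together with the neighbourhoods of I
  have hsub : A ⊆ I ∪ I.biUnion (fun w => A.filter (fun x => G.Adj w x)) := by
    intro x hx
    by_cases hxI : x ∈ I
    · exact mem_union_left _ hxI
    · obtain ⟨w, hw, hadj⟩ := hcover x hx hxI
      exact mem_union_right _ (mem_biUnion.2 ⟨w, hw, mem_filter.2 ⟨hx, hadj⟩⟩)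
  obtain ⟨w, hwI, hwmax⟩ := Finset.exists_max_image I
    (fun w => (A.filter (fun x => G.Adj w x)).card) hIne
  refine ⟨w, hIA hwI, A.filter (fun x => G.Adj w x) |>.erase w, ?_, ?_, ?_⟩
  · intro x hx
    rw [mem_erase] at hx ⊢
    exact ⟨hx.1, (mem_filter.1 hx.2).1⟩
  · intro x hx
    exact (mem_filter.1 (mem_erase.1 hx).2).2
  · have h1 : A.card ≤ I.card + I.card * (A.filter (fun x => G.Adj w x)).card := by
      calc A.card ≤ (I ∪ I.biUnion (fun w => A.filter (fun x => G.Adj w x))).card :=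
            card_le_card hsub
        _ ≤ I.card + (I.biUnion (fun w => A.filter (fun x => G.Adj w x))).card :=
            card_union_le _ _
        _ ≤ I.card + ∑ w ∈ I, (A.filter (fun x => G.Adj w x)).card := by
            gcongr; exact card_biUnion_le
        _ ≤ I.card + I.card * (A.filter (fun x => G.Adj w x)).card := by
            gcongr
            exact Finset.sum_le_card_nsmul _ _ _ (fun x hx => hwmax x hx)
    have h2 : I.card < t := hind I hIA hIind
    have hw : w ∉ A.filter (fun x => G.Adj w x) := fun h => G.loopless.irrefl w (mem_filter.1 h).2
    have h3 : ((A.filter (fun x => G.Adj w x)).erase w).card =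
        (A.filter (fun x => G.Adj w x)).card := by rw [erase_eq_of_notMem hw]
    rw [h3]
    calc A.card ≤ I.card * ((A.filter (fun x => G.Adj w x)).card + 1) := by nlinarith
      _ ≤ t * ((A.filter (fun x => G.Adj w x)).card + 1) :=
          Nat.mul_le_mul_right _ (by omega)


/-- size bookkeeping for the greedy process -/
def need (t : ℕ) : ℕ → ℕ → ℕ
  | 0, M => M
  | k + 1, M => need t k (t * 2 ^ k * M + t)

lemma need_le (t : ℕ) (ht : 1 ≤ t) : ∀ k M, need t k M ≤ (t * 2 ^ k) ^ k * (M + 2) := by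
  intro k
  induction k with
  | zero => intro M; simp [need]
  | succ k ih =>
    intro M
    calc need t (k + 1) M = need t k (t * 2 ^ k * M + t) := rfl
      _ ≤ (t * 2 ^ k) ^ k * (t * 2 ^ k * M + t + 2) := ih _
      _ ≤ (t * 2 ^ (k + 1)) ^ k * (t * 2 ^ (k + 1) * (M + 2)) := by
          have hp : (2:ℕ) ^ k ≤ 2 ^ (k + 1) := Nat.pow_le_pow_right (by norm_num) (by omega)
          have hp2 : (2:ℕ) ≤ 2 ^ (k + 1) := by
            calc (2:ℕ) = 2 ^ 1 := by norm_num
              _ ≤ 2 ^ (k + 1) := Nat.pow_le_pow_right (by norm_num) (by omega)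
          apply Nat.mul_le_mul
          · exact Nat.pow_le_pow_left (by nlinarith) _
          · have e1 : t * 2 ^ k * M ≤ t * 2 ^ (k + 1) * M :=
              Nat.mul_le_mul_right M (Nat.mul_le_mul_left t hp)
            have e2 : 2 * t ≤ t * 2 ^ (k + 1) := by nlinarith
            nlinarith [e1, e2, ht]
      _ = (t * 2 ^ (k + 1)) ^ (k + 1) * (M + 2) := by ring

lemma greedy (hm : 0 < m) (G : SimpleGraph (Fin m)) (t : ℕ) (ht : 1 ≤ t)
    (χ : Finset (Fin m) → Bool) (A0 : Finset (Fin m))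
    (hind : ∀ I ⊆ A0, (∀ x ∈ I, ∀ y ∈ I, x ≠ y → ¬ G.Adj x y) → I.card < t) :
    ∀ (k M : ℕ), need t k M ≤ A0.card →
    ∃ (v : ℕ → Fin m) (col : ℕ → ℕ → Bool) (B : Finset (Fin m)),
      B ⊆ A0 ∧ M ≤ B.card ∧
      (∀ i, i < k → v i ∈ A0) ∧
      (∀ i j, i < j → j < k → v i ≠ v j ∧ G.Adj (v i) (v j)) ∧
      (∀ i, i < k → ∀ x ∈ B, v i ≠ x ∧ G.Adj (v i) x) ∧
      (∀ i j, i < j → j < k → ∀ x ∈ B, χ {v i, v j, x} = col i j) ∧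
      (∀ i j l, i < j → j < l → l < k → χ {v i, v j, v l} = col i j) := by
  intro k
  induction k with
  | zero =>
    intro M hM
    exact ⟨fun _ => ⟨0, hm⟩, fun _ _ => true, A0, Finset.Subset.refl _, hM,
      by omega, by omega, by omega, by omega, by omega⟩
  | succ k ih =>
    intro M hM
    classical
    obtain ⟨v, col, B, hBsub, hBcard, hvmem, hvadj, hvB, hχB, hχv⟩ :=
      ih (t * 2 ^ k * M + t) hM
    have hBne : B.Nonempty := by
      apply card_pos.1
      have : 1 ≤ t * 2 ^ k * M + t := by omega
      omega
    obtain ⟨w, hwB, D, hDsub, hDadj, hDcard⟩ :=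
      exists_high_deg G t B (fun I hI hIind => hind I (hI.trans hBsub) hIind) hBne
    -- D has at least 2^k * M elements
    have hD : 2 ^ k * M ≤ D.card := by
      have h2 : t * (2 ^ k * M) ≤ t * D.card := by nlinarith [le_trans hBcard hDcard]
      exact Nat.le_of_mul_le_mul_left h2 (by omega)
    -- pigeonhole over the 2^k colour patterns
    obtain ⟨p, -, hp⟩ :=
      Finset.exists_le_card_fiber_of_mul_le_card_of_maps_to
        (f := fun x => fun i : Fin k => χ {v i.1, w, x}) (s := D)
        (t := (Finset.univ : Finset (Fin k → Bool)))
        (fun a _ => mem_univ _) univ_nonempty (by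
          simpa using hD)
    set F := D.filter (fun x => (fun i : Fin k => χ {v i.1, w, x}) = p) with hF
    set pext : ℕ → Bool := fun i => if h : i < k then p ⟨i, h⟩ else true with hpext
    refine ⟨fun i => if i = k then w else v i,
      fun i j => if j = k then pext i else col i j, F, ?_, ?_, ?_, ?_, ?_, ?_, ?_⟩
    · exact (hF ▸ (filter_subset _ _)).trans ((hDsub.trans (erase_subset _ _)).trans hBsub)
    · exact hp
    · intro i hi
      by_cases h : i = k
      · simp only [h, if_pos]
        exact hBsub hwB
      · simp only [if_neg h]
        exact hvmem i (by omega)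
    · intro i j hij hj
      have hik : i ≠ k := by omega
      by_cases h : j = k
      · simp only [if_neg hik, h, if_pos]
        exact hvB i (by omega) w hwB
      · simp only [if_neg hik, if_neg h]
        exact hvadj i j hij (by omega)
    · intro i hi x hx
      have hxD : x ∈ D := (filter_subset _ _) hx
      by_cases h : i = k
      · simp only [h, if_pos]
        exact ⟨(G.ne_of_adj (hDadj x hxD)), hDadj x hxD⟩
      · simp only [if_neg h]
        exact hvB i (by omega) x ((erase_subset _ _) (hDsub hxD))
    · intro i j hij hj x hx
      have hik : i ≠ k := by omega
      have hxD : x ∈ D := (filter_subset _ _) hx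
      have hxB : x ∈ B := (erase_subset _ _) (hDsub hxD)
      by_cases h : j = k
      · subst h
        simp only [if_neg hik, if_pos]
        simp only [hpext]
        rw [dif_pos (show i < j by omega)]
        have := (mem_filter.1 hx).2
        exact congrFun this ⟨i, by omega⟩
      · simp only [if_neg hik, if_neg h]
        exact hχB i j hij (by omega) x hxB
    · intro i j l hij hjl hl
      have hik : i ≠ k := by omega
      have hjk : j ≠ k := by omega
      by_cases h : l = k
      · subst h
        simp only [if_neg hik, if_neg hjk, if_pos]
        exact hχB i j hij (by omega) w hwB
      · simp only [if_neg hik, if_neg hjk, if_neg h]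
        exact hχv i j l hij hjl (by omega)
end
lemma two_mul_add_three : ∀ k, 4 ≤ k → 2 * k + 3 ≤ 2 ^ k := by
  intro k hk
  induction k with
  | zero => omega
  | succ k ih =>
    rcases Nat.lt_or_ge k 4 with h | h
    · interval_cases k <;> simp_all <;> omega
    · have := ih (by omega)
      have h2 : (2:ℕ) ^ k ≥ 11 := by
        calc (2:ℕ)^k ≥ 2^4 := Nat.pow_le_pow_right (by norm_num) h
          _ ≥ 11 := by norm_num
      rw [pow_succ]
      omega

lemma budget_arith (n : ℕ) (hn : 2 ≤ n) :
    (2 ^ (4 * n + 2) * 2 ^ 2 ^ (2 * n - 1)) ^ 2 ^ (2 * n - 1) * 2 ≤ 2 ^ 2 ^ (4 * n) := by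
  set s := 2 ^ (2 * n - 1) with hs
  have hLHS : (2 ^ (4 * n + 2) * 2 ^ s) ^ s * 2 = 2 ^ ((4 * n + 2 + s) * s + 1) := by
    rw [← pow_add, ← pow_mul, ← pow_succ]
  rw [hLHS]
  apply Nat.pow_le_pow_right (by norm_num)
  have h2s : 2 * s = 2 ^ (2 * n) := by
    rw [hs, ← pow_succ']
    congr 1
    omega
  have h4 : 4 * s ^ 2 = 2 ^ (4 * n) := by
    have : 4 * s ^ 2 = (2 * s) * (2 * s) := by ring
    rw [this, h2s, ← pow_add]
    congr 1
    omega
  have hlin : 4 * n + 3 ≤ 2 * s := by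
    rw [h2s]
    have := two_mul_add_three (2 * n) (by omega)
    omega
  have hs1 : 1 ≤ s := Nat.one_le_two_pow
  nlinarith [sq_nonneg s]

lemma majority (n : ℕ) (hn : 1 ≤ n) (b : ℕ → Bool) :
    ∃ (J : Finset ℕ) (cc : Bool), J ⊆ range (2 * n - 1) ∧ J.card = n ∧
      ∀ i ∈ J, b i = cc := by

  have hsplit : ((range (2 * n - 1)).filter (fun i => b i = true)).card +
      ((range (2 * n - 1)).filter (fun i => ¬ (b i = true))).card = 2 * n - 1 := by
    have h0 := card_filter_add_card_filter_not
      (s := range (2 * n - 1)) (p := fun i => b i = true)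
    rw [card_range] at h0
    exact h0
  rcases Nat.lt_or_ge (((range (2 * n - 1)).filter (fun i => b i = true)).card) n
    with h | h
  · obtain ⟨J, hJs, hJc⟩ := exists_subset_card_eq
      (show n ≤ ((range (2 * n - 1)).filter (fun i => ¬ (b i = true))).card by omega)
    refine ⟨J, false, hJs.trans (filter_subset _ _), hJc, fun i hi => ?_⟩
    have := (mem_filter.1 (hJs hi)).2
    simpa using this
  · obtain ⟨J, hJs, hJc⟩ := exists_subset_card_eq
      (show n ≤ ((range (2 * n - 1)).filter (fun i => b i = true)).card by omega)
    exact ⟨J, true, hJs.trans (filter_subset _ _), hJc, fun i hi =>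
      (mem_filter.1 (hJs hi)).2⟩

theorem arrow_of_no_indep (n m : ℕ) (hn : 2 ≤ n) (G : SimpleGraph (Fin m))
    (A0 : Finset (Fin m)) (hA0 : 2 ^ 2 ^ (4 * n) ≤ A0.card)
    (hind : ∀ I ⊆ A0, (∀ x ∈ I, ∀ y ∈ I, x ≠ y → ¬ G.Adj x y) →
      I.card < 2 ^ (4 * n + 2)) :
    ArrowKnTri G n := by
  classical
  intro χ
  set t := 2 ^ (4 * n + 2) with hts
  set s := 2 ^ (2 * n - 1) with hss
  have hm0 : 0 < m := by
    have : A0.card ≤ m := by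
      simpa using card_le_card (subset_univ A0)
    have h1 : (1:ℕ) ≤ 2 ^ 2 ^ (4 * n) := Nat.one_le_two_pow
    omega
  have ht1 : 1 ≤ t := Nat.one_le_two_pow
  have hbudget : need t s 0 ≤ A0.card := by
    calc need t s 0 ≤ (t * 2 ^ s) ^ s * (0 + 2) := need_le t ht1 s 0
      _ = (t * 2 ^ s) ^ s * 2 := by ring
      _ ≤ 2 ^ 2 ^ (4 * n) := budget_arith n hn
      _ ≤ A0.card := hA0
  obtain ⟨v, col, B, hBsub, hBcard, hvmem, hvadj, hvB, hχB, hχv⟩ :=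
    greedy hm0 G t ht1 χ A0 hind s 0 hbudget
  -- Ramsey on the index colouring
  obtain ⟨u, b, hu1, hu2, hu3⟩ := ramsey_seq col (2 * n - 1) (range s) (by
    rw [card_range])
  have hus : ∀ i, i < 2 * n - 1 → u i < s := fun i hi => mem_range.1 (hu1 i hi)
  -- majority colour among the 2n-1 indices
  have hmaj := majority n (by omega) b
  obtain ⟨J, cc, hJsub, hJcard, hJcol⟩ := hmaj
  have hJlt : ∀ i ∈ J, i < 2 * n - 1 := fun i hi => mem_range.1 (hJsub hi)
  set w : ℕ → Fin m := fun i => v (u i) with hw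
  -- injectivity of w on J
  have hwlt : ∀ a ∈ J, ∀ c ∈ J, a < c → w a ≠ w c ∧ G.Adj (w a) (w c) := by
    intro a ha c hc hac
    exact hvadj (u a) (u c) (hu2 a c hac (hJlt c hc)) (hus c (hJlt c hc))
  have hwinj : Set.InjOn w J := by
    intro a ha c hc h
    by_contra hne
    rcases Nat.lt_or_ge a c with h1 | h1
    · exact (hwlt a ha c hc h1).1 h
    · exact (hwlt c hc a ha (by omega)).1 h.symm
  refine ⟨J.image w, cc, ?_, ?_⟩
  · constructor
    · intro x hx y hy hxy
      simp only [coe_image, Set.mem_image, mem_coe] at hx hy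
      obtain ⟨a, ha, rfl⟩ := hx
      obtain ⟨c, hc, rfl⟩ := hy
      rcases Nat.lt_or_ge a c with h1 | h1
      · exact (hwlt a ha c hc h1).2
      · have hne : a ≠ c := fun h => hxy (by rw [h])
        exact ((hwlt c hc a ha (by omega)).2).symm
    · rw [card_image_of_injOn hwinj, hJcard]
  · intro T hTK hT3
    have hTcard : T.card = 3 := hT3.card_eq
    set Jt := J.filter (fun i => w i ∈ T) with hJt
    have hTeq : T = Jt.image w := by
      apply Finset.Subset.antisymm
      · intro x hx
        obtain ⟨a, ha, rfl⟩ := mem_image.1 (hTK hx)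
        exact mem_image.2 ⟨a, mem_filter.2 ⟨ha, hx⟩, rfl⟩
      · intro x hx
        obtain ⟨a, ha, rfl⟩ := mem_image.1 hx
        exact (mem_filter.1 ha).2
    have hJtcard : Jt.card = 3 := by
      have : (Jt.image w).card = 3 := by rw [← hTeq]; exact hTcard
      rwa [card_image_of_injOn (hwinj.mono (by
        intro x hx
        exact (mem_filter.1 hx).1))] at this
    obtain ⟨a, bb, c, hab, hbc, hJteq⟩ := sorted_three Jt hJtcard
    have haJ : a ∈ J := (mem_filter.1 (hJteq ▸ (by simp : a ∈ ({a, bb, c} : Finset ℕ)))).1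
    have hbJ : bb ∈ J := (mem_filter.1 (hJteq ▸ (by simp : bb ∈ ({a, bb, c} : Finset ℕ)))).1
    have hcJ : c ∈ J := (mem_filter.1 (hJteq ▸ (by simp : c ∈ ({a, bb, c} : Finset ℕ)))).1
    have hTval : T = {w a, w bb, w c} := by
      rw [hTeq, hJteq]
      simp [Finset.image_insert, Finset.image_singleton]
    rw [hTval]
    have hcs : u c < s := hus c (hJlt c hcJ)
    have h1 : u a < u bb := hu2 a bb hab (hJlt bb hbJ)
    have h2 : u bb < u c := hu2 bb c hbc (hJlt c hcJ)
    have : χ {v (u a), v (u bb), v (u c)} = col (u a) (u bb) :=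
      hχv (u a) (u bb) (u c) h1 h2 hcs
    rw [hw]
    rw [this]
    rw [hu3 a bb hab (hJlt bb hbJ)]
    exact hJcol a haJ

section
variable {m : ℕ}

variable {m : ℕ}

noncomputable def edges (G : SimpleGraph (Fin m)) : Finset (Sym2 (Fin m)) :=
  G.edgeSet.toFinite.toFinset

lemma mem_edges {G : SimpleGraph (Fin m)} {e : Sym2 (Fin m)} :
    e ∈ edges G ↔ e ∈ G.edgeSet := Set.Finite.mem_toFinset _

lemma edges_injective : Function.Injective (edges (m := m)) := by
  intro G H h
  rw [← SimpleGraph.edgeSet_inj]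
  ext e
  constructor <;> intro he
  · exact mem_edges.1 (h ▸ mem_edges.2 he)
  · exact mem_edges.1 (h ▸ mem_edges.2 he)

noncomputable def allPairs (m : ℕ) : Finset (Sym2 (Fin m)) :=
  (univ : Finset (Fin m)).offDiag.image (Function.uncurry Sym2.mk)

lemma card_allPairs : (allPairs m).card = m.choose 2 := by
  rw [allPairs, Sym2.card_image_offDiag, card_univ, Fintype.card_fin]

lemma mem_allPairs {e : Sym2 (Fin m)} : e ∈ allPairs m ↔ ¬ e.IsDiag := by
  constructor
  · intro he
    obtain ⟨p, hp, rfl⟩ := mem_image.1 he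
    rw [mem_offDiag] at hp
    simpa [Function.uncurry] using hp.2.2
  · intro he
    induction e with
    | _ x y =>
      refine mem_image.2 ⟨(x, y), mem_offDiag.2 ⟨mem_univ _, mem_univ _, ?_⟩, rfl⟩
      simpa using he
lemma edges_subset (G : SimpleGraph (Fin m)) : edges G ⊆ allPairs m := by
  intro e he
  rw [mem_edges] at he
  rw [mem_allPairs]
  induction e with
  | _ x y =>
    rw [SimpleGraph.mem_edgeSet] at he
    simpa using he.ne

lemma card_graphs : Fintype.card (SimpleGraph (Fin m)) = 2 ^ m.choose 2 := by
  classical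
  rw [← card_allPairs, ← Finset.card_powerset, ← Finset.card_univ (α := SimpleGraph (Fin m))]
  apply Finset.card_bij' (i := fun G _ => edges G)
    (j := fun s _ => SimpleGraph.fromEdgeSet ↑s)
  · intro G _
    rw [mem_powerset]
    exact edges_subset G
  · intro s _
    exact mem_univ _
  · intro G _
    have : (edges G : Set (Sym2 (Fin m))) = G.edgeSet := Set.Finite.coe_toFinset _
    rw [this, SimpleGraph.fromEdgeSet_edgeSet]
  · intro s hs
    rw [mem_powerset] at hs
    ext e
    rw [mem_edges, SimpleGraph.edgeSet_fromEdgeSet]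
    simp only [Set.mem_diff, Finset.mem_coe, Set.mem_setOf_eq]
    constructor
    · exact fun h => h.1
    · intro h
      exact ⟨h, mem_allPairs.1 (hs h)⟩

lemma card_bad (A : Finset (Fin m)) :
    ((univ : Finset (SimpleGraph (Fin m))).filter
      (fun G => ∀ x ∈ A, ∀ y ∈ A, x ≠ y → ¬ G.Adj x y)).card ≤
      2 ^ (m.choose 2 - A.card.choose 2) := by
  classical
  set Apairs := A.offDiag.image (Function.uncurry Sym2.mk) with hAp
  have hApsub : Apairs ⊆ allPairs m := by
    rw [hAp, allPairs]
    exact image_subset_image (offDiag_mono (subset_univ A))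
  have hApcard : Apairs.card = A.card.choose 2 := Sym2.card_image_offDiag A
  have hbound : ((allPairs m) \ Apairs).powerset.card =
      2 ^ (m.choose 2 - A.card.choose 2) := by
    rw [card_powerset, card_sdiff_of_subset hApsub, card_allPairs, hApcard]
  rw [← hbound]
  apply Finset.card_le_card_of_injOn (fun G => edges G)
  · intro G hG
    rw [mem_coe, mem_filter] at hG
    rw [mem_coe, mem_powerset]
    intro e he
    rw [mem_sdiff]
    refine ⟨edges_subset G he, ?_⟩
    intro heA
    obtain ⟨p, hp, hpe⟩ := mem_image.1 heA
    rw [mem_offDiag] at hp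
    have : G.Adj p.1 p.2 := by
      have := mem_edges.1 he
      rw [← hpe] at this
      exact this
    exact hG.2 p.1 hp.1 p.2 hp.2.1 hp.2.2 this
  · exact fun G _ H _ h => edges_injective h

end
lemma four_mul_le_pow : ∀ a, 5 ≤ a → 4 * a ≤ 2 ^ a := by
  intro a ha
  induction a, ha using Nat.le_induction with
  | base => norm_num
  | succ a ha ih =>
    have h2 : (4:ℕ) ≤ 2 ^ a := by
      calc (4:ℕ) ≤ 4 * a := by omega
        _ ≤ 2 ^ a := ih
    rw [pow_succ]
    omega

theorem stmt5 (n m : ℕ) (hn : 2 ≤ n) (hm : 2 ^ 2 ^ (4 * n) ≤ m) :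
    (3 / 4 : ℝ) * 2 ^ m.choose 2 ≤ Nat.card {G : SimpleGraph (Fin m) // ArrowKnTri G n} := by
  classical
  set N := m.choose 2 with hN
  set a := 2 ^ (4 * n) with haa
  set t := 2 ^ (4 * n + 2) with hts
  have hta : t = 4 * a := by rw [hts, haa, pow_add]; ring
  have ha5 : 5 ≤ a := by
    rw [haa]
    calc (5:ℕ) ≤ 2 ^ 8 := by norm_num
      _ ≤ 2 ^ (4 * n) := Nat.pow_le_pow_right (by norm_num) (by omega)
  have hm0 : 2 ^ a ≤ m := hm
  have htm : t ≤ 2 ^ a := by rw [hta]; exact four_mul_le_pow a ha5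
  -- the fixed vertex subset of size 2^a
  set A0 : Finset (Fin m) := (univ : Finset (Fin (2 ^ a))).map (Fin.castLEEmb hm0) with hA0
  have hA0card : A0.card = 2 ^ a := by
    rw [hA0, card_map, card_univ, Fintype.card_fin]
  -- the bad event
  set Bad : Finset (SimpleGraph (Fin m)) := univ.filter
    (fun G => ∃ I ∈ A0.powersetCard t, ∀ x ∈ I, ∀ y ∈ I, x ≠ y → ¬ G.Adj x y) with hBad
  -- choose number facts
  have hCt : t.choose 2 = 2 * a * (4 * a - 1) := by
    rw [hta, Nat.choose_two_right]
    have h1 : 4 * a * (4 * a - 1) = 2 * (2 * a * (4 * a - 1)) := by ring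
    rw [h1, Nat.mul_div_cancel_left _ (by norm_num : (0:ℕ) < 2)]
  have hkey : a * t + 2 ≤ t.choose 2 := by
    obtain ⟨b, hb⟩ : ∃ b, 4 * a = b + 1 := ⟨4 * a - 1, by omega⟩
    have hbge : 19 ≤ b := by omega
    rw [hCt, hta, hb]
    simp only [Nat.add_sub_cancel]
    nlinarith [ha5, hbge]
  have htN : t.choose 2 ≤ N := by
    rw [hN]
    exact Nat.choose_le_choose 2 (le_trans htm hm0)
  have hN2 : 3 ≤ N := by
    rw [hN]
    calc (3:ℕ) = Nat.choose 3 2 := by norm_num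
      _ ≤ m.choose 2 := Nat.choose_le_choose 2 (by
          have : (3:ℕ) ≤ 2 ^ a := by
            calc (3:ℕ) ≤ 2 ^ 5 := by norm_num
              _ ≤ 2 ^ a := Nat.pow_le_pow_right (by norm_num) ha5
          omega)
  -- bound the bad count
  have hBadcard : Bad.card ≤ 2 ^ (N - 2) := by
    have hsub : Bad ⊆ (A0.powersetCard t).biUnion
        (fun I => univ.filter (fun G => ∀ x ∈ I, ∀ y ∈ I, x ≠ y → ¬ G.Adj x y)) := by
      intro G hG
      rw [hBad, mem_filter] at hG
      obtain ⟨I, hI, hind⟩ := hG.2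
      exact mem_biUnion.2 ⟨I, hI, mem_filter.2 ⟨mem_univ _, hind⟩⟩
    calc Bad.card ≤ _ := card_le_card hsub
      _ ≤ ∑ I ∈ A0.powersetCard t,
          ((univ : Finset (SimpleGraph (Fin m))).filter
            (fun G => ∀ x ∈ I, ∀ y ∈ I, x ≠ y → ¬ G.Adj x y)).card := card_biUnion_le
      _ ≤ ∑ _I ∈ A0.powersetCard t, 2 ^ (N - t.choose 2) := by
          apply Finset.sum_le_sum
          intro I hI
          have hIc : I.card = t := (mem_powersetCard.1 hI).2
          have := card_bad I
          rwa [hIc, ← hN] at this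
      _ = (A0.powersetCard t).card * 2 ^ (N - t.choose 2) := by
          rw [sum_const, smul_eq_mul]
      _ ≤ 2 ^ (a * t) * 2 ^ (N - t.choose 2) := by
          apply Nat.mul_le_mul_right
          rw [card_powersetCard, hA0card]
          calc (2 ^ a).choose t ≤ (2 ^ a) ^ t := Nat.choose_le_pow _ _
            _ = 2 ^ (a * t) := by rw [← pow_mul]
      _ = 2 ^ (a * t + (N - t.choose 2)) := by rw [← pow_add]
      _ ≤ 2 ^ (N - 2) := Nat.pow_le_pow_right (by norm_num) (by omega)
  -- graphs not in Bad are good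
  have hGood : ∀ G : SimpleGraph (Fin m), G ∉ Bad → ArrowKnTri G n := by
    intro G hG
    apply arrow_of_no_indep n m hn G A0 (le_of_eq hA0card.symm)
    intro I hI hind
    by_contra hcon
    push_neg at hcon
    obtain ⟨I', hI', hI'card⟩ := exists_subset_card_eq hcon
    apply hG
    rw [hBad, mem_filter]
    exact ⟨mem_univ _, I', mem_powersetCard.2 ⟨hI'.trans hI, hI'card⟩,
      fun x hx y hy hxy => hind x (hI' hx) y (hI' hy) hxy⟩
  -- count the good graphs
  have htotal : (univ : Finset (SimpleGraph (Fin m))).card = 2 ^ N := by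
    rw [card_univ, card_graphs, hN]
  have hGoodcard : 3 * 2 ^ (N - 2) ≤
      ((univ : Finset (SimpleGraph (Fin m))).filter (fun G => ArrowKnTri G n)).card := by
    have h1 : univ \ Bad ⊆ univ.filter (fun G => ArrowKnTri G n) := by
      intro G hG
      exact mem_filter.2 ⟨mem_univ _, hGood G (mem_sdiff.1 hG).2⟩
    have h2 := card_le_card h1
    rw [card_sdiff_of_subset (by rw [hBad]; exact filter_subset _ _), htotal] at h2
    have hpow : 2 ^ N = 4 * 2 ^ (N - 2) := by
      have he : N - 2 + 2 = N := by omega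
      calc (2:ℕ) ^ N = 2 ^ (N - 2 + 2) := by rw [he]
        _ = 4 * 2 ^ (N - 2) := by rw [pow_add]; ring
    omega
  have hNcard : (Nat.card {G : SimpleGraph (Fin m) // ArrowKnTri G n} : ℕ) =
      ((univ : Finset (SimpleGraph (Fin m))).filter (fun G => ArrowKnTri G n)).card := by
    rw [Nat.card_eq_fintype_card, Fintype.card_subtype]
  rw [hNcard]
  have hpowR : (2:ℝ) ^ N = 4 * 2 ^ (N - 2) := by
    have he : N - 2 + 2 = N := by omega
    calc (2:ℝ) ^ N = 2 ^ (N - 2 + 2) := by rw [he]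
      _ = 4 * 2 ^ (N - 2) := by rw [pow_add]; ring
  calc (3 / 4 : ℝ) * 2 ^ N = 3 * 2 ^ (N - 2) := by rw [hpowR]; ring
    _ ≤ _ := by exact_mod_cast hGoodcard


end AuxRamseyCounting
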